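/- Let Σ₀ and Σ_T be positive definite n×n real matrices, Φ₁₂ an invertible n×n real matrix, Φ₁₁ an arbitrary n×n real matrix, and ε > 0. Let Σ₀^{1/2} denote the positive semidefinite square root of Σ₀ and Σ₀^{−1/2} its inverse, and let D := Σ₀^{−1/2}·( (ε²/4)·I + Σ₀^{1/2}·Φ₁₂⁻¹·Σ_T·(Φ₁₂ᵀ)⁻¹·Σ₀^{1/2} )^{1/2}·Σ₀^{−1/2}, where the inner square root is the positive semidefinite square root of the indicated positive definite matrix. Then both Z₊ := D − Φ₁₂⁻¹Φ₁₁ and Z₋ := −D − Φ₁₂⁻¹Φ₁₁ satisfy the quadratic matrix equation (Φ₁₁ + Φ₁₂·(Z − (ε/2)·Σ₀⁻¹))ᵀ · Σ_T⁻¹ · (Φ₁₁ + Φ₁₂·(Z + (ε/2)·Σ₀⁻¹)) = Σ₀⁻¹. -/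

import Mathlib

open Matrix

set_option maxHeartbeats 1600000

namespace Matrix.PosSemidef

open scoped ComplexOrder

/-- The positive semidefinite square root, as defined in Mathlib of December 2024
(removed since then). -/
noncomputable def sqrt {n 𝕜 : Type*} [Fintype n] [RCLike 𝕜] [DecidableEq n] {A : Matrix n n 𝕜}
    (hA : PosSemidef A) : Matrix n n 𝕜 :=
  hA.1.eigenvectorUnitary.1 * diagonal ((↑) ∘ (Real.sqrt ∘ hA.1.eigenvalues)) *
  (star hA.1.eigenvectorUnitary : Matrix n n 𝕜)

end Matrix.PosSemidef

namespace Matrix.PosSemidef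

open scoped ComplexOrder

theorem sqrt_mul_self {n 𝕜 : Type*} [Fintype n] [RCLike 𝕜] [DecidableEq n] {A : Matrix n n 𝕜}
    (hA : PosSemidef A) : hA.sqrt * hA.sqrt = A := by
  set C : Matrix n n 𝕜 := hA.1.eigenvectorUnitary.1
  set E := diagonal ((↑) ∘ (Real.sqrt ∘ hA.1.eigenvalues) : n → 𝕜)
  have hCC : star C * C = 1 := Matrix.mem_unitaryGroup_iff'.mp hA.1.eigenvectorUnitary.2
  have hEE : E * E = diagonal ((↑) ∘ hA.1.eigenvalues) := by
    rw [diagonal_mul_diagonal]; congr 1; funext v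
    simp only [Function.comp_apply]
    rw [← RCLike.ofReal_mul, Real.mul_self_sqrt (hA.eigenvalues_nonneg v)]
  have h := hA.1.spectral_theorem
  rw [Unitary.conjStarAlgAut_apply] at h
  calc hA.sqrt * hA.sqrt = C * (E * (star C * C) * E) * star C := by
        change C * E * star C * (C * E * star C) = _
        simp only [Matrix.mul_assoc]
    _ = A := by rw [hCC, Matrix.mul_one, hEE]; exact h.symm

theorem posSemidef_sqrt {n 𝕜 : Type*} [Fintype n] [RCLike 𝕜] [DecidableEq n] {A : Matrix n n 𝕜}
    (hA : PosSemidef A) : hA.sqrt.PosSemidef := by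
  have hD : (diagonal ((↑) ∘ (Real.sqrt ∘ hA.1.eigenvalues)) : Matrix n n 𝕜).PosSemidef :=
    posSemidef_diagonal_iff.mpr (fun i => RCLike.ofReal_nonneg.mpr (Real.sqrt_nonneg _))
  have := hD.mul_mul_conjTranspose_same (hA.1.eigenvectorUnitary : Matrix n n 𝕜)
  rw [← Matrix.star_eq_conjTranspose] at this
  exact this

end Matrix.PosSemidef

/-- both roots `Z₊ = D − Φ₁₂⁻¹Φ₁₁` and `Z₋ = −D − Φ₁₂⁻¹Φ₁₁`, where
`D = S0^{-1/2} ((ε²/4)I + S0^{1/2} Φ₁₂⁻¹ Σ_T (Φ₁₂ᵀ)⁻¹ S0^{1/2})^{1/2} S0^{-1/2}`,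
solve the quadratic matrix equation
`(Φ₁₁ + Φ₁₂(Z − (ε/2)S0⁻¹))ᵀ Σ_T⁻¹ (Φ₁₁ + Φ₁₂(Z + (ε/2)S0⁻¹)) = S0⁻¹`. -/
theorem quadratic_matrix_equation_roots {n : ℕ}
    (S0 ST Φ11 Φ12 : Matrix (Fin n) (Fin n) ℝ) (ε : ℝ) (hε : 0 < ε)
    (hS0 : S0.PosDef) (hST : ST.PosDef) (hΦ12 : IsUnit Φ12)
    (hM : ((ε ^ 2 / 4) • (1 : Matrix (Fin n) (Fin n) ℝ) +
      hS0.posSemidef.sqrt * Φ12⁻¹ * ST * (Φ12ᵀ)⁻¹ * hS0.posSemidef.sqrt).PosSemidef) :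
    ∀ Z : Matrix (Fin n) (Fin n) ℝ,
      (Z = (hS0.posSemidef.sqrt)⁻¹ * hM.sqrt * (hS0.posSemidef.sqrt)⁻¹ - Φ12⁻¹ * Φ11 ∨
       Z = -((hS0.posSemidef.sqrt)⁻¹ * hM.sqrt * (hS0.posSemidef.sqrt)⁻¹) - Φ12⁻¹ * Φ11) →
      (Φ11 + Φ12 * (Z - (ε / 2) • S0⁻¹))ᵀ * ST⁻¹ *
        (Φ11 + Φ12 * (Z + (ε / 2) • S0⁻¹)) = S0⁻¹ := by
  intro Z hZ
  set S : Matrix (Fin n) (Fin n) ℝ := hS0.posSemidef.sqrt with hSdef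
  set R : Matrix (Fin n) (Fin n) ℝ := hM.sqrt with hRdef
  set c : ℝ := ε / 2 with hc
  -- basic facts about S
  have hSsym : Sᵀ = S := by
    have h := hS0.posSemidef.posSemidef_sqrt.isHermitian
    rwa [Matrix.IsHermitian, conjTranspose_eq_transpose_of_trivial] at h
  have hSsq : S * S = S0 := hS0.posSemidef.sqrt_mul_self
  have hSunit : IsUnit S := by
    have h : IsUnit (S * S) := hSsq ▸ hS0.isUnit
    exact ((Commute.refl S).isUnit_mul_iff.mp h).1
  have hSdet : IsUnit S.det := (isUnit_iff_isUnit_det S).mp hSunit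
  -- basic facts about R
  have hRsym : Rᵀ = R := by
    have h := hM.posSemidef_sqrt.isHermitian
    rwa [Matrix.IsHermitian, conjTranspose_eq_transpose_of_trivial] at h
  have hRsq : R * R = (ε ^ 2 / 4) • (1 : Matrix (Fin n) (Fin n) ℝ) +
      S * Φ12⁻¹ * ST * (Φ12ᵀ)⁻¹ * S := hM.sqrt_mul_self
  have hΦdet : IsUnit Φ12.det := (isUnit_iff_isUnit_det Φ12).mp hΦ12
  have hΦTdet : IsUnit Φ12ᵀ.det := isUnit_det_transpose Φ12 hΦdet
  have hSTunit : IsUnit ST := hST.isUnit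
  have hSTdet : IsUnit ST.det := (isUnit_iff_isUnit_det ST).mp hSTunit
  have hS0inv : S0⁻¹ = S⁻¹ * S⁻¹ := by rw [← hSsq, Matrix.mul_inv_rev]
  set A : Matrix (Fin n) (Fin n) ℝ := R - c • 1 with hA
  set B : Matrix (Fin n) (Fin n) ℝ := R + c • 1 with hB
  set P : Matrix (Fin n) (Fin n) ℝ := S * Φ12⁻¹ * ST * (Φ12ᵀ)⁻¹ * S with hP
  have hc2 : c * c = ε ^ 2 / 4 := by rw [hc]; ring
  have hAB : A * B = P := by
    have : A * B = R * R - (c * c) • 1 := by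
      simp only [hA, hB, Matrix.sub_mul, Matrix.mul_add, Matrix.add_mul,
        Matrix.smul_mul, Matrix.mul_smul, Matrix.one_mul, Matrix.mul_one, smul_sub, smul_add, smul_smul]
      abel
    rw [this, hRsq, hc2]
    abel
  have hBA : B * A = P := by
    have : B * A = R * R - (c * c) • 1 := by
      simp only [hA, hB, Matrix.sub_mul, Matrix.mul_sub, Matrix.add_mul,
        Matrix.smul_mul, Matrix.mul_smul, Matrix.one_mul, Matrix.mul_one, smul_sub, smul_add, smul_smul]
      abel
    rw [this, hRsq, hc2]
    abel
  have hPunit : IsUnit P := by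
    rw [hP]
    exact ((((hSunit.mul (isUnit_nonsing_inv_iff.mpr hΦ12)).mul hSTunit).mul
      (isUnit_nonsing_inv_iff.mpr ((Matrix.isUnit_transpose Φ12).mpr hΦ12))).mul hSunit)
  have hcommAB : Commute A B := by
    rw [Commute, SemiconjBy, hAB, hBA]
  have hABunit : IsUnit A ∧ IsUnit B := hcommAB.isUnit_mul_iff.mp (hAB ▸ hPunit)
  have hAdet : IsUnit A.det := (isUnit_iff_isUnit_det A).mp hABunit.1
  have hBdet : IsUnit B.det := (isUnit_iff_isUnit_det B).mp hABunit.2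
  -- the middle product equals P⁻¹
  have hPinv : S⁻¹ * Φ12ᵀ * ST⁻¹ * Φ12 * S⁻¹ = P⁻¹ := by
    rw [hP, Matrix.mul_inv_rev, Matrix.mul_inv_rev, Matrix.mul_inv_rev, Matrix.mul_inv_rev,
      nonsing_inv_nonsing_inv _ hΦTdet, nonsing_inv_nonsing_inv _ hΦdet]
    simp only [Matrix.mul_assoc]
  -- factorization of the two factors
  have hΦΦ : Φ12 * (Φ12⁻¹ * Φ11) = Φ11 := by
    rw [← Matrix.mul_assoc, Matrix.mul_nonsing_inv _ hΦdet, Matrix.one_mul]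
  have hfact : ∀ (E : Matrix (Fin n) (Fin n) ℝ) (d : ℝ),
      Φ11 + Φ12 * ((S⁻¹ * E * S⁻¹ - Φ12⁻¹ * Φ11) + d • S0⁻¹) =
        Φ12 * (S⁻¹ * (E + d • 1) * S⁻¹) := by
    intro E d
    simp only [hS0inv, Matrix.mul_add, Matrix.add_mul, Matrix.mul_sub,
      Matrix.sub_mul, Matrix.mul_smul, Matrix.smul_mul, Matrix.one_mul,
      Matrix.mul_one, Matrix.mul_assoc, hΦΦ]
    abel
  -- transpose of a factor
  have htr : ∀ (X : Matrix (Fin n) (Fin n) ℝ), Xᵀ = X →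
      (Φ12 * (S⁻¹ * X * S⁻¹))ᵀ = S⁻¹ * X * S⁻¹ * Φ12ᵀ := by
    intro X hX
    simp only [Matrix.transpose_mul, Matrix.transpose_nonsing_inv, hSsym, hX,
      Matrix.mul_assoc]
  -- main computation
  have hmain : ∀ (X Y : Matrix (Fin n) (Fin n) ℝ), Xᵀ = X →
      X * P⁻¹ * Y = 1 →
      (Φ12 * (S⁻¹ * X * S⁻¹))ᵀ * ST⁻¹ * (Φ12 * (S⁻¹ * Y * S⁻¹)) = S0⁻¹ := by
    intro X Y hX hXY
    rw [htr X hX, hS0inv]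
    calc S⁻¹ * X * S⁻¹ * Φ12ᵀ * ST⁻¹ * (Φ12 * (S⁻¹ * Y * S⁻¹))
        = S⁻¹ * (X * (S⁻¹ * Φ12ᵀ * ST⁻¹ * Φ12 * S⁻¹) * Y) * S⁻¹ := by
          simp only [Matrix.mul_assoc]
      _ = S⁻¹ * (X * P⁻¹ * Y) * S⁻¹ := by rw [hPinv, Matrix.mul_assoc X]
      _ = S⁻¹ * S⁻¹ := by rw [hXY, Matrix.mul_one]
  have hPi : P⁻¹ = B⁻¹ * A⁻¹ := by rw [← hAB, Matrix.mul_inv_rev]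
  have hABcomm_inv : A * B⁻¹ = B⁻¹ * A := by
    have h1 : B⁻¹ * (A * B) * B⁻¹ = B⁻¹ * (B * A) * B⁻¹ := by rw [hAB, hBA]
    calc A * B⁻¹ = B⁻¹ * B * A * B⁻¹ := by
          rw [Matrix.nonsing_inv_mul _ hBdet, Matrix.one_mul]
      _ = B⁻¹ * (B * A) * B⁻¹ := by simp only [Matrix.mul_assoc]
      _ = B⁻¹ * (A * B) * B⁻¹ := h1.symm
      _ = B⁻¹ * A * (B * B⁻¹) := by simp only [Matrix.mul_assoc]
      _ = B⁻¹ * A := by rw [Matrix.mul_nonsing_inv _ hBdet, Matrix.mul_one]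
  rcases hZ with hZ | hZ
  · -- Z₊ : X = A, Y = B
    have hZ' : Z = S⁻¹ * R * S⁻¹ - Φ12⁻¹ * Φ11 := hZ
    have h1 : Z - c • S0⁻¹ = (S⁻¹ * R * S⁻¹ - Φ12⁻¹ * Φ11) + (-c) • S0⁻¹ := by
      rw [hZ']; simp [sub_eq_add_neg, neg_smul]
    have h2 : Z + c • S0⁻¹ = (S⁻¹ * R * S⁻¹ - Φ12⁻¹ * Φ11) + c • S0⁻¹ := by rw [hZ']
    rw [h1, h2, hfact R (-c), hfact R c]
    have hXA : R + (-c) • 1 = A := by rw [hA]; simp [sub_eq_add_neg, neg_smul]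
    have hYB : R + c • 1 = B := rfl
    rw [hXA, hYB]
    refine hmain A B ?_ ?_
    · rw [hA, Matrix.transpose_sub, hRsym, Matrix.transpose_smul, Matrix.transpose_one]
    · rw [hPi]
      calc A * (B⁻¹ * A⁻¹) * B = (A * B⁻¹) * (A⁻¹ * B) := by simp only [Matrix.mul_assoc]
        _ = B⁻¹ * A * (A⁻¹ * B) := by rw [hABcomm_inv]
        _ = B⁻¹ * (A * A⁻¹) * B := by simp only [Matrix.mul_assoc]
        _ = 1 := by
            rw [Matrix.mul_nonsing_inv _ hAdet, Matrix.mul_one,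
              Matrix.nonsing_inv_mul _ hBdet]
  · -- Z₋ : X = -B, Y = -A
    have hZ' : Z = -(S⁻¹ * R * S⁻¹) - Φ12⁻¹ * Φ11 := hZ
    have hneg : -(S⁻¹ * R * S⁻¹) = S⁻¹ * (-R) * S⁻¹ := by
      simp [Matrix.mul_neg, Matrix.neg_mul]
    have h1 : Z - c • S0⁻¹ = (S⁻¹ * (-R) * S⁻¹ - Φ12⁻¹ * Φ11) + (-c) • S0⁻¹ := by
      rw [hZ', ← hneg]; simp [sub_eq_add_neg, neg_smul]
    have h2 : Z + c • S0⁻¹ = (S⁻¹ * (-R) * S⁻¹ - Φ12⁻¹ * Φ11) + c • S0⁻¹ := by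
      rw [hZ', ← hneg]
    rw [h1, h2, hfact (-R) (-c), hfact (-R) c]
    have hXB : -R + (-c) • 1 = -B := by rw [hB]; simp [neg_smul]; abel
    have hYA : -R + c • 1 = -A := by rw [hA]; simp [neg_sub]; abel
    rw [hXB, hYA]
    refine hmain (-B) (-A) ?_ ?_
    · rw [Matrix.transpose_neg, hB, Matrix.transpose_add, hRsym, Matrix.transpose_smul,
        Matrix.transpose_one]
    · rw [hPi]
      calc (-B) * (B⁻¹ * A⁻¹) * (-A) = B * (B⁻¹ * A⁻¹) * A := by
            simp [Matrix.neg_mul, Matrix.mul_neg]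
        _ = (B * B⁻¹) * (A⁻¹ * A) := by simp only [Matrix.mul_assoc]
        _ = 1 := by
            rw [Matrix.mul_nonsing_inv _ hBdet, Matrix.nonsing_inv_mul _ hAdet,
              Matrix.one_mul]
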